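/- Let V be a finite-dimensional real vector space, let a be a positive definite symmetric bilinear form on V, let b ∈ V with a(b,b) > 0, and let κ ∈ ℝ satisfy exp(κ) · a(b,b) = 4. Define a new symmetric bilinear form h := exp(κ) • a and the vector W := (1/2) • b. Then h(W,W) = 1, and for every y ∈ V with a(b,y) > 0, the number F := a(y,y)/a(b,y) is positive, satisfies F = h(y,y)/(2 · h(W,y)), and satisfies the navigation equation h((1/F)•y − W, (1/F)•y − W) = 1. -/

import Mathlib

open Real

/-- Theorem 1, pointwise algebraic content.
Let `V` be a finite-dimensional real vector space, `a` a positive definite symmetric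
bilinear form, `b ∈ V` with `a b b > 0`, and `κ ∈ ℝ` with `exp κ * a b b = 4`.
With `h := exp κ • a` and `W := (1/2) • b`, we have `h W W = 1`, and for every `y` with
`a b y > 0`, the number `F := a y y / a b y` is positive, equals `h y y / (2 * h W y)`,
and satisfies the navigation equation `h ((1/F) • y - W) ((1/F) • y - W) = 1`. -/
theorem stmt0 {V : Type*} [AddCommGroup V] [Module ℝ V] [FiniteDimensional ℝ V]
    (a : LinearMap.BilinForm ℝ V)
    (ha_symm : ∀ x y : V, a x y = a y x)
    (ha_pos : ∀ v : V, v ≠ 0 → 0 < a v v)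
    (b : V) (hb : 0 < a b b)
    (κ : ℝ) (hκ : Real.exp κ * a b b = 4)
    (h : LinearMap.BilinForm ℝ V) (hh : h = Real.exp κ • a)
    (W : V) (hW : W = (1/2 : ℝ) • b) :
    h W W = 1 ∧
      ∀ y : V, 0 < a b y →
        0 < a y y / a b y ∧
        a y y / a b y = h y y / (2 * h W y) ∧
        h ((1 / (a y y / a b y)) • y - W) ((1 / (a y y / a b y)) • y - W) = 1 := by
  subst hh hW
  have hE := Real.exp_pos κ
  simp only [LinearMap.smul_apply, smul_eq_mul,
    map_smul, LinearMap.smul_apply, map_sub, LinearMap.sub_apply, LinearMap.map_smul₂] at *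
  constructor
  · nlinarith [hκ]
  · intro y hy
    have hy0 : y ≠ 0 := by
      rintro rfl; simp at hy
    have hyy : 0 < a y y := ha_pos y hy0
    have hF : 0 < a y y / a b y := div_pos hyy hy
    refine ⟨hF, ?_, ?_⟩
    · field_simp
    · have hby : a y b = a b y := ha_symm y b
      set F := a y y / a b y with hFdef
      have hFne : F ≠ 0 := ne_of_gt hF
      have key : F * a b y = a y y := by
        rw [hFdef]; field_simp
      rw [hby, ← key]
      field_simp
      ring_nf
      linear_combination ((a y) y * ((a b) y)⁻¹) * hκ
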